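/- Invariant polynomials of a compact linear group separate orbits of the diagonal action: let n be a natural number and G a subgroup of GL (Fin n) ℝ whose image in Matrix (Fin n) (Fin n) ℝ is a compact set, acting diagonally on m-tuples of vectors. Then for all v, w : Fin m → (Fin n → ℝ), the following are equivalent: (1) for every polynomial P : MvPolynomial (Fin m × Fin n) ℝ invariant under the diagonal action (i.e. for all g ∈ G and all x : Fin m → (Fin n → ℝ), eval (fun p ↦ ((g : Matrix (Fin n) (Fin n) ℝ).mulVec (x p.1)) p.2) P = eval (fun p ↦ x p.1 p.2) P), one has eval (fun p ↦ v p.1 p.2) P = eval (fun p ↦ w p.1 p.2) P; (2) there exists g ∈ G with (g : Matrix (Fin n) (Fin n) ℝ).mulVec (v i) = w i for all i. -/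

import Mathlib

open Matrix MvPolynomial MeasureTheory Topology

set_option synthInstance.maxHeartbeats 1000000
set_option maxHeartbeats 1000000

namespace CGISOaux

variable {n m : ℕ}

noncomputable def fM (M : Matrix (Fin n) (Fin n) ℝ) :
    Fin m × Fin n → MvPolynomial (Fin m × Fin n) ℝ :=
  fun p => ∑ k, C (M p.2 k) * X (p.1, k)

def act (M : Matrix (Fin n) (Fin n) ℝ) (x : Fin m × Fin n → ℝ) : Fin m × Fin n → ℝ :=
  fun p => (M.mulVec fun j => x (p.1, j)) p.2

lemma eval_fM (M : Matrix (Fin n) (Fin n) ℝ) (x : Fin m × Fin n → ℝ) (p : Fin m × Fin n) :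
    eval x (fM M p) = act M x p := by
  simp [fM, act, mulVec, dotProduct]

lemma eval_bind₁_fM (M : Matrix (Fin n) (Fin n) ℝ) (x : Fin m × Fin n → ℝ)
    (P : MvPolynomial (Fin m × Fin n) ℝ) :
    eval x (bind₁ (fM M) P) = eval (act M x) P := by
  have e1 : ∀ (y : Fin m × Fin n → ℝ) (q : MvPolynomial (Fin m × Fin n) ℝ),
      aeval y q = eval y q := fun y q => by
    rw [aeval_eq_eval₂Hom, Algebra.algebraMap_self]; rfl
  have h := aeval_bind₁ (R := ℝ) (S := ℝ) x (fM M) P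
  rw [e1, e1] at h
  rw [h]
  have : (fun i => aeval x (fM M i)) = act M x := by
    funext p
    rw [e1, eval_fM]
  rw [this]

lemma act_act (M N : Matrix (Fin n) (Fin n) ℝ) (x : Fin m × Fin n → ℝ) :
    act M (act N x) = act (M * N) x := by
  funext p
  simp only [act]
  rw [← mulVec_mulVec]

lemma act_one (x : Fin m × Fin n → ℝ) : act (1 : Matrix (Fin n) (Fin n) ℝ) x = x := by
  funext p
  simp [act, one_mulVec]

lemma continuous_act_pt (x : Fin m × Fin n → ℝ) :
    Continuous fun M : Matrix (Fin n) (Fin n) ℝ => act M x := by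
  refine continuous_pi fun p => ?_
  simp only [act, mulVec, dotProduct]
  exact continuous_finset_sum _ fun k _ =>
    ((continuous_apply_apply p.2 k).mul continuous_const)

lemma totalDegree_fM_le (M : Matrix (Fin n) (Fin n) ℝ) (p : Fin m × Fin n) :
    (fM M p).totalDegree ≤ 1 := by
  refine (totalDegree_finset_sum _ _).trans (Finset.sup_le fun k _ => ?_)
  refine (totalDegree_mul _ _).trans ?_
  simp [totalDegree_C, totalDegree_X]

lemma totalDegree_bind₁_fM_le (M : Matrix (Fin n) (Fin n) ℝ)
    (P : MvPolynomial (Fin m × Fin n) ℝ) :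
    (bind₁ (fM M) P).totalDegree ≤ P.totalDegree := by
  conv_lhs => rw [P.as_sum]
  rw [map_sum]
  refine (totalDegree_finset_sum _ _).trans (Finset.sup_le fun d hd => ?_)
  rw [bind₁_monomial]
  refine (totalDegree_mul _ _).trans ?_
  rw [totalDegree_C, zero_add]
  refine (totalDegree_finset_prod _ _).trans ?_
  calc (∑ i ∈ d.support, (fM M i ^ d i).totalDegree)
      ≤ ∑ i ∈ d.support, d i := Finset.sum_le_sum fun i _ =>
        (totalDegree_pow _ _).trans
          (by simpa using Nat.mul_le_mul_left (d i) (totalDegree_fM_le M i))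
    _ ≤ P.totalDegree := le_totalDegree hd

lemma continuous_coeff_bind₁_fM (P : MvPolynomial (Fin m × Fin n) ℝ) (α : Fin m × Fin n →₀ ℕ) :
    Continuous fun M : Matrix (Fin n) (Fin n) ℝ => coeff α (bind₁ (fM M) P) := by
  induction P using MvPolynomial.induction_on generalizing α with
  | C a => simpa [bind₁_C_right] using continuous_const
  | add p q hp hq => simpa [coeff_add] using ((hp α).add (hq α) : Continuous fun M => _ + _)
  | mul_X p i hp =>
      have hrw : ∀ M : Matrix (Fin n) (Fin n) ℝ,
          coeff α (bind₁ (fM M) (p * X i)) =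
            ∑ k, M i.2 k * (if (i.1, k) ∈ α.support
              then coeff (α - Finsupp.single (i.1, k) 1) (bind₁ (fM M) p) else 0) := by
        intro M
        rw [_root_.map_mul, bind₁_X_right]
        show coeff α (bind₁ (fM M) p * fM M i) = _
        rw [fM, Finset.mul_sum]
        rw [coeff_sum]
        refine Finset.sum_congr rfl fun k _ => ?_
        rw [mul_left_comm, coeff_C_mul, coeff_mul_X']
      simp only [hrw]
      refine continuous_finset_sum _ fun k _ => ?_
      refine ((continuous_apply_apply i.2 k).mul ?_)
      split_ifs with hk
      exacts [hp _, continuous_const]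

lemma compactSpace_subgroup (G : Subgroup (GL (Fin n) ℝ))
    (hG : IsCompact {M : Matrix (Fin n) (Fin n) ℝ |
      ∃ g ∈ G, (g : Matrix (Fin n) (Fin n) ℝ) = M}) :
    CompactSpace ↥G := by
  set S := {M : Matrix (Fin n) (Fin n) ℝ | ∃ g ∈ G, (g : Matrix (Fin n) (Fin n) ℝ) = M} with hS
  let e : ↥G → Matrix (Fin n) (Fin n) ℝ × Matrix (Fin n) (Fin n) ℝ :=
    fun g => (↑(↑g : GL (Fin n) ℝ), ↑((↑g : GL (Fin n) ℝ)⁻¹))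
  have he : IsEmbedding e := by
    have h1 : IsEmbedding (Units.embedProduct (Matrix (Fin n) (Fin n) ℝ)) :=
      Units.isEmbedding_embedProduct
    have h2 : IsEmbedding ((Subtype.val : ↥G → GL (Fin n) ℝ)) :=
      IsEmbedding.subtypeVal
    have h3 : IsEmbedding
        (Prod.map (id : Matrix (Fin n) (Fin n) ℝ → _)
          (MulOpposite.unop : (Matrix (Fin n) (Fin n) ℝ)ᵐᵒᵖ → _)) :=
      ((Homeomorph.refl _).prodCongr MulOpposite.opHomeomorph.symm).isEmbedding
    exact (h3.comp h1).comp h2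
  have hrange : Set.range e =
      (S ×ˢ S) ∩ {p : Matrix (Fin n) (Fin n) ℝ × Matrix (Fin n) (Fin n) ℝ |
        p.1 * p.2 = 1 ∧ p.2 * p.1 = 1} := by
    ext ⟨a, b⟩
    constructor
    · rintro ⟨g, hgab⟩
      rw [← hgab]
      refine ⟨⟨⟨↑g, g.2, rfl⟩, ⟨(↑g)⁻¹, G.inv_mem g.2, rfl⟩⟩, ?_, ?_⟩
      · show ((↑g : GL (Fin n) ℝ) : Matrix (Fin n) (Fin n) ℝ) *
            (((↑g : GL (Fin n) ℝ)⁻¹ : GL (Fin n) ℝ) : Matrix (Fin n) (Fin n) ℝ) = 1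
        rw [← Units.val_mul, mul_inv_cancel, Units.val_one]
      · show (((↑g : GL (Fin n) ℝ)⁻¹ : GL (Fin n) ℝ) : Matrix (Fin n) (Fin n) ℝ) *
            ((↑g : GL (Fin n) ℝ) : Matrix (Fin n) (Fin n) ℝ) = 1
        rw [← Units.val_mul, inv_mul_cancel, Units.val_one]
    · rintro ⟨⟨⟨g, hg, rfl⟩, ⟨h, hh, hbh⟩⟩, hab1, hab2⟩
      refine ⟨⟨g, hg⟩, ?_⟩
      have hinv : ((g⁻¹ : GL (Fin n) ℝ) : Matrix (Fin n) (Fin n) ℝ) = b := by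
        calc ((g⁻¹ : GL (Fin n) ℝ) : Matrix (Fin n) (Fin n) ℝ)
            = ↑(g⁻¹ : GL (Fin n) ℝ) * ((g : Matrix (Fin n) (Fin n) ℝ) * b) := by
              rw [hab1, mul_one]
          _ = (↑(g⁻¹ : GL (Fin n) ℝ) * (g : Matrix (Fin n) (Fin n) ℝ)) * b := by
              rw [mul_assoc]
          _ = b := by rw [← Units.val_mul, inv_mul_cancel, Units.val_one, one_mul]
      have : e ⟨g, hg⟩ = (↑g, ((g⁻¹ : GL (Fin n) ℝ) : Matrix (Fin n) (Fin n) ℝ)) := rfl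
      rw [this, hinv]
  have hcr : IsCompact (Set.range e) := by
    rw [hrange]
    refine (hG.prod hG).inter_right ?_
    exact (isClosed_eq (continuous_fst.mul continuous_snd) continuous_const).inter
      (isClosed_eq (continuous_snd.mul continuous_fst) continuous_const)
  rw [← isCompact_univ_iff, he.isCompact_iff, Set.image_univ]
  exact hcr

lemma exists_invariant_separator (G : Subgroup (GL (Fin n) ℝ))
    (hG : IsCompact {M : Matrix (Fin n) (Fin n) ℝ |
      ∃ g ∈ G, (g : Matrix (Fin n) (Fin n) ℝ) = M})
    (v w : Fin m → (Fin n → ℝ))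
    (hne : ¬ ∃ g ∈ G, ∀ i, (g : Matrix (Fin n) (Fin n) ℝ).mulVec (v i) = w i) :
    ∃ Q : MvPolynomial (Fin m × Fin n) ℝ,
      (∀ g ∈ G, ∀ x : Fin m → (Fin n → ℝ),
        eval (fun p => ((g : Matrix (Fin n) (Fin n) ℝ).mulVec (x p.1)) p.2) Q =
          eval (fun p => x p.1 p.2) Q) ∧
      eval (fun p => v p.1 p.2) Q ≠ eval (fun p => w p.1 p.2) Q := by
  haveI cG : CompactSpace ↥G := compactSpace_subgroup G hG
  haveI : Nonempty ↥G := ⟨1⟩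
  letI : MeasurableSpace ↥G := borel ↥G
  haveI : BorelSpace ↥G := ⟨rfl⟩
  haveI : LocallyCompactSpace ↥G := inferInstance
  set μ : Measure ↥G := Measure.haar with hμdef
  -- the matrix of the inverse of a group element
  set mg : ↥G → Matrix (Fin n) (Fin n) ℝ := fun g => ↑((↑g : GL (Fin n) ℝ)⁻¹) with hmg
  have cont_mg : Continuous mg :=
    Units.continuous_val.comp (continuous_inv.comp continuous_subtype_val)
  set tv : Fin m × Fin n → ℝ := fun p => v p.1 p.2 with htv
  set tw : Fin m × Fin n → ℝ := fun p => w p.1 p.2 with htw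
  have cont_orb : ∀ x : Fin m × Fin n → ℝ, Continuous fun g : ↥G => act (mg g) x :=
    fun x => (continuous_act_pt x).comp cont_mg
  set Ov : Set (Fin m × Fin n → ℝ) := Set.range fun g : ↥G => act (mg g) tv with hOv
  set Ow : Set (Fin m × Fin n → ℝ) := Set.range fun g : ↥G => act (mg g) tw with hOw
  have cOv : IsCompact Ov := isCompact_range (cont_orb tv)
  have cOw : IsCompact Ow := isCompact_range (cont_orb tw)
  have mg_one : mg 1 = 1 := by
    simp [hmg]
  have hmemv : tv ∈ Ov := ⟨1, by simp only [mg_one, act_one]⟩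
  have hmemw : tw ∈ Ow := ⟨1, by simp only [mg_one, act_one]⟩
  have hdisj : Disjoint Ov Ow := by
    rw [Set.disjoint_left]
    rintro y ⟨a, rfl⟩ ⟨b, hb0⟩
    have hb : act (mg b) tw = act (mg a) tv := hb0
    apply hne
    refine ⟨↑b * (↑a)⁻¹, G.mul_mem b.2 (G.inv_mem a.2), ?_⟩
    have h1 : act ((↑(↑b : GL (Fin n) ℝ) : Matrix (Fin n) (Fin n) ℝ)) (act (mg b) tw) = tw := by
      rw [act_act, ← Units.val_mul, mul_inv_cancel, Units.val_one, act_one]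
    have h2 : tw = act ((((↑b : GL (Fin n) ℝ) * (↑a : GL (Fin n) ℝ)⁻¹ : GL (Fin n) ℝ) :
        Matrix (Fin n) (Fin n) ℝ)) tv := by
      rw [← h1, hb, act_act, Units.val_mul]
    intro i
    funext k
    have := congrFun h2.symm (i, k)
    simpa [act, htw, htv] using this
  obtain ⟨f, hf0, hf1, -⟩ :=
    exists_continuous_zero_one_of_isClosed cOv.isClosed cOw.isClosed hdisj
  set K : Set (Fin m × Fin n → ℝ) := Ov ∪ Ow with hK
  have cK : IsCompact K := cOv.union cOw
  haveI : CompactSpace ↥K := isCompact_iff_compactSpace.mp cK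
  let Φ : MvPolynomial (Fin m × Fin n) ℝ →ₐ[ℝ] C(↥K, ℝ) :=
    { toFun := fun P => ⟨fun y => eval (y : Fin m × Fin n → ℝ) P,
        (MvPolynomial.continuous_eval P).comp continuous_subtype_val⟩
      map_one' := by ext y; simp
      map_mul' := fun p q => by ext y; simp
      map_zero' := by ext y; simp
      map_add' := fun p q => by ext y; simp
      commutes' := fun r => by ext y; simp [MvPolynomial.algebraMap_eq] }
  have sep : (Φ.range).SeparatesPoints := by
    rintro x y hxy
    have hex : ∃ p, (x : Fin m × Fin n → ℝ) p ≠ (y : Fin m × Fin n → ℝ) p := by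
      by_contra hc
      push_neg at hc
      exact hxy (Subtype.ext (funext hc))
    obtain ⟨p, hp⟩ := hex
    refine ⟨⇑(Φ (X p)), ⟨Φ (X p), ⟨X p, rfl⟩, rfl⟩, ?_⟩
    simpa [Φ] using hp
  obtain ⟨gP, hgP⟩ :=
    ContinuousMap.exists_mem_subalgebra_near_continuousMap_of_separatesPoints
      Φ.range sep (f.restrict K) (1/4) (by norm_num)
  obtain ⟨P, hP⟩ := gP.2
  have hnear : ∀ y (hy : y ∈ K), |eval y P - f y| < 1/4 := by
    intro y hy
    have h1 : ‖((gP : C(↥K, ℝ)) - f.restrict K) ⟨y, hy⟩‖ ≤ ‖(gP : C(↥K, ℝ)) - f.restrict K‖ :=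
      ContinuousMap.norm_coe_le_norm _ _
    have h2 := lt_of_le_of_lt h1 hgP
    have h3 : ((gP : C(↥K, ℝ)) - f.restrict K) ⟨y, hy⟩ = eval y P - f y := by
      rw [ContinuousMap.sub_apply, ← hP]
      rfl
    rwa [h3, Real.norm_eq_abs] at h2
  have hPv : ∀ y ∈ Ov, eval y P ≤ 1/4 := by
    intro y hy
    have h0 : f y = 0 := hf0 hy
    have := hnear y (Or.inl hy)
    rw [h0, sub_zero] at this
    linarith [abs_le.mp this.le]
  have hPw : ∀ y ∈ Ow, (3:ℝ)/4 ≤ eval y P := by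
    intro y hy
    have h0 : f y = 1 := hf1 hy
    have := hnear y (Or.inr hy)
    rw [h0] at this
    have := abs_le.mp this.le
    linarith [this.1]
  -- the averaged polynomial
  set D := P.totalDegree with hD
  set Aexp : Finset (Fin m × Fin n →₀ ℕ) :=
    Finset.Iic (Finsupp.equivFunOnFinite.symm fun _ => D) with hAexp
  have hsupp : ∀ M : Matrix (Fin n) (Fin n) ℝ, (bind₁ (fM M) P).support ⊆ Aexp := by
    intro M α hα
    rw [hAexp, Finset.mem_Iic, Finsupp.le_def]
    intro i
    have h1 : α i ≤ α.sum fun _ k => k := by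
      rcases eq_or_ne (α i) 0 with h | h
      · simp [h]
      · exact Finset.single_le_sum (fun j _ => Nat.zero_le _)
          (Finsupp.mem_support_iff.mpr h)
    have h2 : (α.sum fun _ k => k) ≤ D :=
      (le_totalDegree hα).trans (totalDegree_bind₁_fM_le M P)
    simpa using h1.trans h2
  have int_c : ∀ α : Fin m × Fin n →₀ ℕ,
      Integrable (fun g : ↥G => coeff α (bind₁ (fM (mg g)) P)) μ := fun α =>
    (((continuous_coeff_bind₁_fM P α).comp cont_mg)).integrable_of_hasCompactSupport
      (HasCompactSupport.of_compactSpace _)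
  have int_eval : ∀ x : Fin m × Fin n → ℝ,
      Integrable (fun g : ↥G => eval (act (mg g) x) P) μ := fun x =>
    (((MvPolynomial.continuous_eval P).comp ((continuous_act_pt x).comp cont_mg)
      )).integrable_of_hasCompactSupport (HasCompactSupport.of_compactSpace _)
  set Q : MvPolynomial (Fin m × Fin n) ℝ :=
    ∑ α ∈ Aexp, monomial α (∫ g, coeff α (bind₁ (fM (mg g)) P) ∂μ) with hQ
  have keyQ : ∀ x : Fin m × Fin n → ℝ, eval x Q = ∫ g, eval (act (mg g) x) P ∂μ := by
    intro x
    have step1 : eval x Q =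
        ∑ α ∈ Aexp, (∫ g, coeff α (bind₁ (fM (mg g)) P) ∂μ) * ∏ i, x i ^ α i := by
      rw [hQ, map_sum]
      refine Finset.sum_congr rfl fun α _ => ?_
      rw [eval_monomial, Finsupp.prod_pow]
    have step2 : ∀ α ∈ Aexp,
        (∫ g, coeff α (bind₁ (fM (mg g)) P) ∂μ) * ∏ i, x i ^ α i
          = ∫ g, coeff α (bind₁ (fM (mg g)) P) * ∏ i, x i ^ α i ∂μ :=
      fun α _ => (integral_mul_const _ _).symm
    rw [step1, Finset.sum_congr rfl step2,
      ← integral_finset_sum _ (fun α _ => (int_c α).mul_const _)]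
    refine integral_congr_ae (Filter.Eventually.of_forall fun g => ?_)
    show (∑ α ∈ Aexp, coeff α (bind₁ (fM (mg g)) P) * ∏ i, x i ^ α i)
      = eval (act (mg g) x) P
    rw [← eval_bind₁_fM, eval_eq']
    exact (Finset.sum_subset (hsupp (mg g)) (fun α _ hα => by
      rw [MvPolynomial.notMem_support_iff.mp hα, zero_mul])).symm
  refine ⟨Q, ?_, ?_⟩
  · intro h hh x
    set tx : Fin m × Fin n → ℝ := fun p => x p.1 p.2 with htx
    have hx : (fun p : Fin m × Fin n => ((h : Matrix (Fin n) (Fin n) ℝ).mulVec (x p.1)) p.2)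
        = act (h : Matrix (Fin n) (Fin n) ℝ) tx := rfl
    rw [hx, keyQ, keyQ]
    set h' : ↥G := ⟨h, hh⟩ with hh'
    have key2 : ∀ g : ↥G, act (mg g) (act (h : Matrix (Fin n) (Fin n) ℝ) tx)
        = act (mg (h'⁻¹ * g)) tx := by
      intro g
      rw [act_act]
      congr 1
    calc ∫ g, eval (act (mg g) (act (h : Matrix (Fin n) (Fin n) ℝ) tx)) P ∂μ
        = ∫ g, eval (act (mg (h'⁻¹ * g)) tx) P ∂μ := by
          refine integral_congr_ae (Filter.Eventually.of_forall fun g => ?_)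
          show eval (act (mg g) (act (h : Matrix (Fin n) (Fin n) ℝ) tx)) P
            = eval (act (mg (h'⁻¹ * g)) tx) P
          rw [key2]
      _ = ∫ g, eval (act (mg g) tx) P ∂μ :=
          integral_mul_left_eq_self (fun g => eval (act (mg g) tx) P) h'⁻¹
  · intro hEq
    have hv : eval tv Q ≤ (1/4) * (μ Set.univ).toReal := by
      rw [keyQ tv]
      calc ∫ g, eval (act (mg g) tv) P ∂μ
          ≤ ∫ _g, (1/4 : ℝ) ∂μ :=
            integral_mono (int_eval tv) (integrable_const _)
              (fun g => hPv _ ⟨g, rfl⟩)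
        _ = (1/4) * (μ Set.univ).toReal := by
            rw [integral_const, smul_eq_mul, mul_comm, Measure.real]
    have hw : (3/4) * (μ Set.univ).toReal ≤ eval tw Q := by
      rw [keyQ tw]
      calc (3/4) * (μ Set.univ).toReal = ∫ _g, ((3:ℝ)/4) ∂μ := by
            rw [integral_const, smul_eq_mul, mul_comm, Measure.real]
        _ ≤ ∫ g, eval (act (mg g) tw) P ∂μ :=
            integral_mono (integrable_const _) (int_eval tw)
              (fun g => hPw _ ⟨g, rfl⟩)
    have hμpos : 0 < (μ Set.univ).toReal := by
      refine ENNReal.toReal_pos ?_ (measure_ne_top μ _)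
      exact (isOpen_univ.measure_ne_zero μ Set.univ_nonempty)
    rw [hEq] at hv
    linarith

end CGISOaux

/-- Invariant polynomials of a compact linear group separate the orbits of the
diagonal action on `m`-tuples of vectors: two tuples `v, w` have the same value
under every polynomial invariant under the diagonal `G`-action iff a single
element of `G` maps `v` to `w`. -/
theorem compact_group_invariants_separate_orbits {n m : ℕ}
    (G : Subgroup (GL (Fin n) ℝ))
    (hG : IsCompact {M : Matrix (Fin n) (Fin n) ℝ |
      ∃ g ∈ G, (g : Matrix (Fin n) (Fin n) ℝ) = M})
    (v w : Fin m → (Fin n → ℝ)) :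
    (∀ P : MvPolynomial (Fin m × Fin n) ℝ,
      (∀ g ∈ G, ∀ x : Fin m → (Fin n → ℝ),
        eval (fun p => ((g : Matrix (Fin n) (Fin n) ℝ).mulVec (x p.1)) p.2) P =
          eval (fun p => x p.1 p.2) P) →
      eval (fun p => v p.1 p.2) P = eval (fun p => w p.1 p.2) P)
    ↔ ∃ g ∈ G, ∀ i, (g : Matrix (Fin n) (Fin n) ℝ).mulVec (v i) = w i := by
  constructor
  · intro h1
    by_contra hne
    obtain ⟨Q, hQinv, hQne⟩ := CGISOaux.exists_invariant_separator G hG v w hne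
    exact hQne (h1 Q hQinv)
  · rintro ⟨g, hg, hgvw⟩ P hPinv
    have h := hPinv g hg v
    rw [← h]
    have : (fun p : Fin m × Fin n => ((g : Matrix (Fin n) (Fin n) ℝ).mulVec (v p.1)) p.2)
        = fun p : Fin m × Fin n => w p.1 p.2 := by
      funext p
      rw [hgvw p.1]
    rw [this]
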